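/- Let λ, μ > 0 with ρ = λ/μ < 1, let i ≥ 0 be an integer, and let t ≥ 0. Then the series ∑_{j=0}^∞ p_{ij}(t) converges and equals 1, where p_{ij}(t) = (2/π)·ρ^{(j−i)/2}·∫₀^π e^{−μ t γ(y)}/γ(y) · a_i(y)·a_j(y) dy + (1−ρ)·ρ^j. -/

import Mathlib

open Real MeasureTheory Set Filter

/-- γ(y) = 1 + ρ − 2√ρ·cos(y). -/
noncomputable def gam (ρ y : ℝ) : ℝ := 1 + ρ - 2 * Real.sqrt ρ * Real.cos y

/-- a_k(y) = sin(k·y) − √ρ·sin((k+1)·y). -/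
noncomputable def aco (ρ : ℝ) (k : ℕ) (y : ℝ) : ℝ :=
  Real.sin ((k : ℝ) * y) - Real.sqrt ρ * Real.sin (((k : ℝ) + 1) * y)

/-- Transient expected queue length of an M/M/1 queue started with `i` customers. -/
noncomputable def EL (lam mu : ℝ) (i : ℕ) (t : ℝ) : ℝ :=
  (2 / Real.pi) * (lam / mu) ^ ((1 - (i : ℝ)) / 2) *
    (∫ y in (0 : ℝ)..Real.pi,
      Real.exp (-(mu * t * gam (lam / mu) y)) / (gam (lam / mu) y) ^ 2 *
        (aco (lam / mu) i y * Real.sin y)) +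
  (lam / mu) / (1 - lam / mu)

/-- Transient probability that an M/M/1 queue started with `i` customers has `j` at time `t`. -/
noncomputable def pq (lam mu : ℝ) (i j : ℕ) (t : ℝ) : ℝ :=
  (2 / Real.pi) * (lam / mu) ^ (((j : ℝ) - (i : ℝ)) / 2) *
    (∫ y in (0 : ℝ)..Real.pi,
      Real.exp (-(mu * t * gam (lam / mu) y)) / gam (lam / mu) y *
        (aco (lam / mu) i y * aco (lam / mu) j y)) +
  (1 - lam / mu) * (lam / mu) ^ j

/-- Erlang(n) density with rate `mu`: f_n(t) = μⁿ t^{n−1} e^{−μt}/(n−1)!. -/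
noncomputable def erl (mu : ℝ) (n : ℕ) (t : ℝ) : ℝ :=
  mu ^ n * t ^ (n - 1) * Real.exp (-(mu * t)) / (Nat.factorial (n - 1) : ℝ)

/-- Expected total time to complete queue with `a` customers first, then queue with `b`. -/
noncomputable def ETT (lam mu : ℝ) (a b : ℕ) : ℝ :=
  ((a : ℝ) + 2) / mu + (1 / mu) * ∫ t in Set.Ioi (0 : ℝ), erl mu (a + 1) t * EL lam mu b t

section aux
variable {ρ : ℝ}

lemma gam_ge (hρ : 0 ≤ ρ) (y : ℝ) : (1 - Real.sqrt ρ)^2 ≤ gam ρ y := by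
  have h1 : Real.cos y ≤ 1 := Real.cos_le_one y
  have h2 : 0 ≤ Real.sqrt ρ := Real.sqrt_nonneg ρ
  have h3 : Real.sqrt ρ ^ 2 = ρ := Real.sq_sqrt hρ
  simp only [gam]
  nlinarith [mul_le_mul_of_nonneg_left h1 h2]

lemma gam_pos (hρ0 : 0 ≤ ρ) (hρ1 : ρ < 1) (y : ℝ) : 0 < gam ρ y := by
  have hr1 : Real.sqrt ρ < 1 := by
    rw [show (1:ℝ) = Real.sqrt 1 by simp]
    exact Real.sqrt_lt_sqrt hρ0 hρ1
  have := gam_ge hρ0 y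
  nlinarith

lemma aco_abs_le (hρ : 0 ≤ ρ) (k : ℕ) (y : ℝ) : |aco ρ k y| ≤ 1 + Real.sqrt ρ := by
  have h2 : 0 ≤ Real.sqrt ρ := Real.sqrt_nonneg ρ
  have habs : ∀ x : ℝ, |Real.sin x| ≤ 1 := fun x =>
    abs_le.2 ⟨Real.neg_one_le_sin x, Real.sin_le_one x⟩
  calc |aco ρ k y| ≤ |Real.sin ((k : ℝ) * y)| + |Real.sqrt ρ * Real.sin (((k : ℝ) + 1) * y)| :=
        abs_sub _ _
    _ ≤ 1 + Real.sqrt ρ := by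
        rw [abs_mul, abs_of_nonneg h2]
        gcongr
        · exact habs _
        · simpa using mul_le_of_le_one_right h2 (habs _)

lemma rpow_split (hρ0 : 0 < ρ) (i j : ℕ) :
    ρ ^ (((j : ℝ) - (i : ℝ)) / 2) = ρ ^ (-(i : ℝ) / 2) * Real.sqrt ρ ^ j := by
  rw [Real.sqrt_eq_rpow, ← Real.rpow_natCast (ρ ^ ((1:ℝ)/2)) j, ← Real.rpow_mul hρ0.le,
    ← Real.rpow_add hρ0]
  ring_nf

/-- the telescoping pointwise sum -/
lemma aco_hasSum (hρ0 : 0 < ρ) (hρ1 : ρ < 1) (i : ℕ) (y : ℝ) :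
    HasSum (fun j : ℕ => ρ ^ (((j : ℝ) - (i : ℝ)) / 2) * aco ρ j y) 0 := by
  set r := Real.sqrt ρ with hr
  have hr0 : 0 ≤ r := Real.sqrt_nonneg ρ
  have hr1 : r < 1 := by
    rw [hr, show (1:ℝ) = Real.sqrt 1 by simp]
    exact Real.sqrt_lt_sqrt hρ0.le hρ1
  set c := ρ ^ (-(i : ℝ) / 2) with hc
  set b : ℕ → ℝ := fun j => r ^ j * Real.sin ((j : ℝ) * y) with hb
  have key : ∀ j : ℕ, ρ ^ (((j : ℝ) - (i : ℝ)) / 2) * aco ρ j y = c * (b j - b (j + 1)) := by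
    intro j
    rw [rpow_split hρ0 i j]
    simp only [hb, aco, Nat.cast_add, Nat.cast_one]
    ring
  have hbnd : ∀ j : ℕ, |b j| ≤ r ^ j := by
    intro j
    rw [hb, abs_mul, abs_of_nonneg (pow_nonneg hr0 j)]
    exact mul_le_of_le_one_right (pow_nonneg hr0 j)
      (abs_le.2 ⟨Real.neg_one_le_sin _, Real.sin_le_one _⟩)
  have hsum : Summable (fun j : ℕ => ρ ^ (((j : ℝ) - (i : ℝ)) / 2) * aco ρ j y) := by
    apply Summable.of_norm_bounded (g := fun j => |c| * (2 * r ^ j))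
      (((summable_geometric_of_lt_one hr0 hr1).mul_left 2).mul_left |c|)
    intro j
    rw [key j, norm_mul, Real.norm_eq_abs, Real.norm_eq_abs]
    gcongr
    calc |b j - b (j + 1)| ≤ |b j| + |b (j+1)| := abs_sub _ _
      _ ≤ r ^ j + r ^ (j + 1) := add_le_add (hbnd j) (hbnd (j+1))
      _ ≤ 2 * r ^ j := by
          have : r ^ (j + 1) ≤ r ^ j := pow_le_pow_of_le_one hr0 hr1.le (Nat.le_succ j)
          linarith
  rw [hsum.hasSum_iff_tendsto_nat]
  have hps : ∀ n : ℕ, ∑ j ∈ Finset.range n, ρ ^ (((j : ℝ) - (i : ℝ)) / 2) * aco ρ j y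
      = c * (b 0 - b n) := by
    intro n
    simp only [key]
    rw [← Finset.mul_sum, Finset.sum_range_sub']
  simp only [hps]
  have hb0 : b 0 = 0 := by simp [hb]
  have hbn : Tendsto b atTop (nhds 0) := by
    apply squeeze_zero_norm hbnd
    exact tendsto_pow_atTop_nhds_zero_of_lt_one hr0 hr1
  have := (hbn.const_sub (b 0)).const_mul c
  simpa [hb0] using this

end aux

/-- integrand -/
noncomputable def Fint (ρ c : ℝ) (i j : ℕ) (y : ℝ) : ℝ :=
  ρ ^ (((j : ℝ) - (i : ℝ)) / 2) *
    (Real.exp (-(c * gam ρ y)) / gam ρ y * (aco ρ i y * aco ρ j y))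

set_option maxHeartbeats 1000000 in
theorem main_hasSum (ρ : ℝ) (hρ0 : 0 < ρ) (hρ1 : ρ < 1) (c : ℝ) (hc : 0 ≤ c) (i : ℕ) :
    HasSum (fun j : ℕ =>
      (2 / Real.pi) * ρ ^ (((j : ℝ) - (i : ℝ)) / 2) *
        (∫ y in (0 : ℝ)..Real.pi,
          Real.exp (-(c * gam ρ y)) / gam ρ y * (aco ρ i y * aco ρ j y)) +
      (1 - ρ) * ρ ^ j) 1 := by
  have hr0 : 0 ≤ Real.sqrt ρ := Real.sqrt_nonneg ρ
  have hr1 : Real.sqrt ρ < 1 := by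
    rw [show (1:ℝ) = Real.sqrt 1 by simp]
    exact Real.sqrt_lt_sqrt hρ0.le hρ1
  have hgam : ∀ y, 0 < gam ρ y := gam_pos hρ0.le hρ1
  have hgamge : ∀ y, (1 - Real.sqrt ρ)^2 ≤ gam ρ y := gam_ge hρ0.le
  -- continuity
  have hcg : Continuous (gam ρ) := by
    unfold gam
    exact continuous_const.sub (continuous_const.mul Real.continuous_cos)
  have hca : ∀ k : ℕ, Continuous (aco ρ k) := by
    intro k
    unfold aco
    exact (Real.continuous_sin.comp (continuous_const.mul continuous_id)).sub
      (continuous_const.mul (Real.continuous_sin.comp (continuous_const.mul continuous_id)))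
  have hcG : Continuous (fun y => Real.exp (-(c * gam ρ y)) / gam ρ y) :=
    (Real.continuous_exp.comp (continuous_const.mul hcg).neg).div hcg (fun y => (hgam y).ne')
  have hcF : ∀ j : ℕ, Continuous (Fint ρ c i j) := by
    intro j
    unfold Fint
    exact continuous_const.mul (hcG.mul ((hca i).mul (hca j)))
  -- bound
  set C : ℝ := ρ ^ (-(i : ℝ)/2) *
    ((1 + Real.sqrt ρ) * (1 + Real.sqrt ρ) / (1 - Real.sqrt ρ)^2) with hC
  have hFb : ∀ (j : ℕ) (y : ℝ), ‖Fint ρ c i j y‖ ≤ C * Real.sqrt ρ ^ j := by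
    intro j y
    have h1 : |ρ ^ (((j:ℝ)-(i:ℝ))/2)| = ρ ^ (-(i:ℝ)/2) * Real.sqrt ρ ^ j := by
      rw [rpow_split hρ0, abs_of_nonneg (by positivity)]
    have hgb : |Real.exp (-(c * gam ρ y)) / gam ρ y| ≤ 1 / (1 - Real.sqrt ρ)^2 := by
      rw [abs_of_nonneg (div_nonneg (Real.exp_nonneg _) (hgam y).le)]
      apply div_le_div₀ zero_le_one _ (by nlinarith) (hgamge y)
      rw [Real.exp_le_one_iff]
      have : 0 ≤ c * gam ρ y := mul_nonneg hc (hgam y).le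
      linarith
    have hai := aco_abs_le hρ0.le i y
    have haj := aco_abs_le hρ0.le j y
    have hai0 := abs_nonneg (aco ρ i y)
    have haj0 := abs_nonneg (aco ρ j y)
    calc ‖Fint ρ c i j y‖
        = |ρ ^ (((j:ℝ)-(i:ℝ))/2)| * (|Real.exp (-(c * gam ρ y)) / gam ρ y| *
            (|aco ρ i y| * |aco ρ j y|)) := by
          unfold Fint
          rw [Real.norm_eq_abs, abs_mul, abs_mul, abs_mul]
      _ ≤ (ρ ^ (-(i:ℝ)/2) * Real.sqrt ρ ^ j) * ((1 / (1 - Real.sqrt ρ)^2) *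
            ((1 + Real.sqrt ρ) * (1 + Real.sqrt ρ))) := by
          rw [h1]
          gcongr
      _ = C * Real.sqrt ρ ^ j := by rw [hC]; ring
  -- the sum of integrals is zero
  have hInt : HasSum (fun j : ℕ => ∫ y in (0:ℝ)..Real.pi, Fint ρ c i j y)
      (∫ y in (0:ℝ)..Real.pi, (0:ℝ)) := by
    refine intervalIntegral.hasSum_integral_of_dominated_convergence
      (F := fun j => Fint ρ c i j) (f := fun _ => (0:ℝ)) (μ := volume)
      (a := 0) (b := Real.pi)
      (fun (j : ℕ) (_ : ℝ) => C * Real.sqrt ρ ^ j) ?_ ?_ ?_ ?_ ?_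
    · exact fun j => (hcF j).aestronglyMeasurable
    · exact fun j => Filter.Eventually.of_forall fun y _ => hFb j y
    · exact Filter.Eventually.of_forall fun y _ =>
        (summable_geometric_of_lt_one hr0 hr1).mul_left C
    · exact intervalIntegrable_const
    · refine Filter.Eventually.of_forall fun y _ => ?_
      have h := (aco_hasSum hρ0 hρ1 i y).mul_left
        (Real.exp (-(c * gam ρ y)) / gam ρ y * aco ρ i y)
      rw [mul_zero] at h
      refine h.congr_fun fun j => ?_
      unfold Fint
      ring
  -- geometric part
  rw [intervalIntegral.integral_zero] at hInt
  have hgeo : HasSum (fun j : ℕ => (1 - ρ) * ρ ^ j) 1 := by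
    have h := (hasSum_geometric_of_lt_one hρ0.le hρ1).mul_left (1 - ρ)
    rwa [mul_inv_cancel₀ (by linarith : (1:ℝ) - ρ ≠ 0)] at h
  have htot := (hInt.mul_left (2 / Real.pi)).add hgeo
  rw [mul_zero, zero_add] at htot
  refine htot.congr_fun fun j => ?_
  unfold Fint
  rw [intervalIntegral.integral_const_mul, ← mul_assoc]

/-- The transient probabilities sum to 1: ∑_j p_{ij}(t) = 1. -/
theorem pq_hasSum_one (lam mu : ℝ) (hlam : 0 < lam) (hmu : 0 < mu)
    (hρ : lam / mu < 1) (i : ℕ) (t : ℝ) (ht : 0 ≤ t) :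
    HasSum (fun j : ℕ => pq lam mu i j t) 1 := by
  have h := main_hasSum (lam / mu) (div_pos hlam hmu) hρ (mu * t)
    (mul_nonneg hmu.le ht) i
  exact h.congr_fun fun j => by rw [pq]
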